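/- For every integer d ≥ 1 and every natural number m, the number of lattice points in the m-th dilate of the d-dimensional cross-polytope equals ∑_{j=0}^{d} C(d,j)·C(d-j+m, d); that is, the cardinality of {x ∈ ℤ^d : |x_1| + ... + |x_d| ≤ m} equals ∑_{j=0}^{d} C(d,j)·C(d-j+m, d), where C(·,·) denotes the binomial coefficient. -/

import Mathlib

open Finset

/-- Bounded stars and bars: the number of `d`-tuples of naturals, each `< b`,
with sum at most `k < b`, is `(d + k).choose d`. -/
lemma crossPolytope_aux_count (b : ℕ) (d : ℕ) : ∀ (k : ℕ), k < b →
    #((Fintype.piFinset fun _ : Fin d => Finset.range b).filter fun z => ∑ i, z i ≤ k)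
      = (d + k).choose d := by
  induction d with
  | zero =>
    intro k hk
    rw [Finset.filter_true_of_mem (by simp)]
    simp
  | succ d ih =>
    intro k hk
    set box := Fintype.piFinset fun _ : Fin (d + 1) => Finset.range b with hbox
    have hmem : ∀ z ∈ box.filter fun z => ∑ i, z i ≤ k, z 0 ∈ Finset.range b := by
      intro z hz
      exact Fintype.mem_piFinset.1 (Finset.mem_filter.1 hz).1 0
    rw [Finset.card_eq_sum_card_fiberwise hmem]
    have hA : ∀ a, a ≤ k →
        #((box.filter fun z => ∑ i, z i ≤ k).filter fun z => z 0 = a)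
          = (d + (k - a)).choose d := by
      intro a ha
      rw [← ih (k - a) (lt_of_le_of_lt (Nat.sub_le _ _) hk)]
      refine Finset.card_nbij' (fun z : Fin (d + 1) → ℕ => Fin.tail z)
        (fun w : Fin d → ℕ => (Fin.cons a w : Fin (d + 1) → ℕ)) ?_ ?_ ?_ ?_
      · intro z hz
        obtain ⟨hz, hz0⟩ := Finset.mem_filter.1 hz
        obtain ⟨hzbox, hzsum⟩ := Finset.mem_filter.1 hz
        rw [Finset.mem_coe, Finset.mem_filter, Fintype.mem_piFinset]
        constructor
        · intro i
          beta_reduce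
          exact Fintype.mem_piFinset.1 hzbox i.succ
        · beta_reduce
          have hs := Fin.sum_univ_succ z
          have hz0' : z 0 = a := hz0
          rw [hs, hz0'] at hzsum
          have he : ∑ i : Fin d, Fin.tail z i = ∑ i : Fin d, z i.succ := rfl
          rw [he]
          omega
      · intro w hw
        obtain ⟨hwbox, hwsum⟩ := Finset.mem_filter.1 hw
        rw [Finset.mem_coe, Finset.mem_filter, Finset.mem_filter, Fintype.mem_piFinset]
        refine ⟨⟨?_, ?_⟩, ?_⟩
        · intro i
          beta_reduce
          induction i using Fin.cases with
          | zero => simpa using lt_of_le_of_lt ha hk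
          | succ j => simpa using Fintype.mem_piFinset.1 hwbox j
        · beta_reduce
          rw [Fin.sum_univ_succ]
          simp only [Fin.cons_zero, Fin.cons_succ]
          omega
        · simp
      · intro z hz
        have hz0 : z 0 = a := (Finset.mem_filter.1 hz).2
        beta_reduce
        rw [← hz0]
        exact Fin.cons_self_tail z
      · intro w _
        beta_reduce
        exact Fin.tail_cons (α := fun _ : Fin (d + 1) => ℕ) a w
    have hA0 : ∀ a, k < a →
        #((box.filter fun z => ∑ i, z i ≤ k).filter fun z => z 0 = a) = 0 := by
      intro a ha
      rw [Finset.card_eq_zero, Finset.eq_empty_iff_forall_notMem]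
      intro z hz
      obtain ⟨hz, hz0⟩ := Finset.mem_filter.1 hz
      have hzsum := (Finset.mem_filter.1 hz).2
      have : z 0 ≤ ∑ i, z i := Finset.single_le_sum (fun i _ => Nat.zero_le _) (Finset.mem_univ 0)
      omega
    have hsub : Finset.range (k + 1) ⊆ Finset.range b := Finset.range_subset_range.2 (by omega)
    rw [← Finset.sum_subset hsub (fun a _ ha => hA0 a (by simpa using ha))]
    rw [Finset.sum_congr rfl fun a ha => hA a (by
      have := Finset.mem_range.1 ha; omega)]
    have h1 : ∀ a ∈ Finset.range (k + 1),
        (d + (k - a)).choose d = (fun j => (d + j).choose d) (k + 1 - 1 - a) := by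
      intro a ha; simp
    rw [Finset.sum_congr rfl h1, Finset.sum_range_reflect (fun j => (d + j).choose d) (k + 1)]
    have h2 : ∀ j ∈ Finset.range (k + 1), (d + j).choose d = (j + d).choose d := by
      intro j _; rw [add_comm]
    rw [Finset.sum_congr rfl h2, Nat.sum_range_add_choose k d]
    congr 1
    omega

/-- The fiber of the sign-pattern map over a set `s` of negative coordinates has
cardinality `(d - #s + m).choose d`. -/
lemma crossPolytope_fiber_count (d m : ℕ) (s : Finset (Fin d)) :
    #(((Fintype.piFinset fun _ : Fin d => Finset.Icc (-(m : ℤ)) m).filter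
          fun x => ∑ i, |x i| ≤ (m : ℤ)).filter
        fun x => (Finset.univ.filter fun i => x i < 0) = s)
      = (d - s.card + m).choose d := by
  have hsd : s.card ≤ d := by simpa using Finset.card_le_univ s
  have hscard : (∑ i : Fin d, (if i ∈ s then 1 else 0)) = s.card := by
    rw [Finset.sum_ite_mem, Finset.univ_inter, Finset.sum_const, smul_eq_mul, mul_one]
  by_cases hsm : s.card ≤ m
  · have key : #(((Fintype.piFinset fun _ : Fin d => Finset.Icc (-(m : ℤ)) m).filter
          fun x => ∑ i, |x i| ≤ (m : ℤ)).filter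
        fun x => (Finset.univ.filter fun i => x i < 0) = s)
        = #((Fintype.piFinset fun _ : Fin d => Finset.range (m + 1)).filter
            fun z => ∑ i, z i ≤ m - s.card) := by
      refine Finset.card_nbij'
        (fun x : Fin d → ℤ => fun i => if i ∈ s then (-(x i) - 1).toNat else (x i).toNat)
        (fun z : Fin d → ℕ => fun i => if i ∈ s then -(z i : ℤ) - 1 else (z i : ℤ))
        ?_ ?_ ?_ ?_
      · intro x hx
        obtain ⟨hx, hxs⟩ := Finset.mem_filter.1 hx
        obtain ⟨hxbox, hxsum⟩ := Finset.mem_filter.1 hx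
        have hneg : ∀ i, x i < 0 ↔ i ∈ s := by
          intro i; rw [← hxs]; simp
        -- sum of |x i| as naturals
        have hxsum' : (∑ i, (x i).natAbs) ≤ m := by
          have hcast : ((∑ i, (x i).natAbs : ℕ) : ℤ) ≤ (m : ℤ) := by
            rw [Nat.cast_sum]
            calc (∑ i, ((x i).natAbs : ℤ)) = ∑ i, |x i| :=
                  Finset.sum_congr rfl fun i _ => Int.natCast_natAbs (x i)
              _ ≤ (m : ℤ) := hxsum
          exact_mod_cast hcast
        have habs : ∀ i, (if i ∈ s then (-(x i) - 1).toNat else (x i).toNat)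
            + (if i ∈ s then 1 else 0) = (x i).natAbs := by
          intro i
          by_cases hi : i ∈ s <;> simp only [hi, if_true, if_false]
          · have : x i < 0 := (hneg i).2 hi
            omega
          · have : ¬ x i < 0 := fun h => hi ((hneg i).1 h)
            omega
        have hsums : (∑ i, (if i ∈ s then (-(x i) - 1).toNat else (x i).toNat)) + s.card
            = ∑ i, (x i).natAbs := by
          rw [← hscard, ← Finset.sum_add_distrib]
          exact Finset.sum_congr rfl fun i _ => habs i
        rw [Finset.mem_coe, Finset.mem_filter, Fintype.mem_piFinset]
        constructor
        · intro i
          beta_reduce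
          rw [Finset.mem_range]
          have hsl := Finset.single_le_sum
            (f := fun j => if j ∈ s then (-(x j) - 1).toNat else (x j).toNat)
            (fun j _ => Nat.zero_le _) (Finset.mem_univ i)
          beta_reduce at hsl
          omega
        · beta_reduce
          omega
      · intro z hz
        obtain ⟨hzbox, hzsum⟩ := Finset.mem_filter.1 hz
        have hzn : ∀ i, z i ≤ m - s.card := by
          intro i
          have h1 : z i ≤ ∑ j, z j :=
            Finset.single_le_sum (fun j _ => Nat.zero_le _) (Finset.mem_univ i)
          omega
        have habs : ∀ i, (if i ∈ s then -(z i : ℤ) - 1 else (z i : ℤ)).natAbs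
            = z i + (if i ∈ s then 1 else 0) := by
          intro i
          by_cases hi : i ∈ s <;> simp only [hi, if_true, if_false] <;> omega
        have hsums : ∑ i, |if i ∈ s then -(z i : ℤ) - 1 else (z i : ℤ)|
            = (((∑ i, z i) + s.card : ℕ) : ℤ) := by
          have h1 : ∑ i, |if i ∈ s then -(z i : ℤ) - 1 else (z i : ℤ)|
              = ∑ i, ((z i + (if i ∈ s then 1 else 0) : ℕ) : ℤ) := by
            refine Finset.sum_congr rfl fun i _ => ?_
            rw [← Int.natCast_natAbs, habs i]
          rw [h1, ← Nat.cast_sum]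
          congr 1
          rw [Finset.sum_add_distrib, hscard]
        rw [Finset.mem_coe, Finset.mem_filter, Finset.mem_filter, Fintype.mem_piFinset]
        refine ⟨⟨?_, ?_⟩, ?_⟩
        · intro i
          beta_reduce
          rw [Finset.mem_Icc]
          have h0 := hzn i
          by_cases hi : i ∈ s
          · have hs1 : 1 ≤ s.card := Finset.card_pos.2 ⟨i, hi⟩
            simp only [hi, if_true]
            constructor <;> omega
          · simp only [hi, if_false]
            constructor <;> omega
        · beta_reduce
          rw [hsums]
          have : (∑ i, z i) + s.card ≤ m := by omega
          exact_mod_cast this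
        · beta_reduce
          ext i
          simp only [Finset.mem_filter, Finset.mem_univ, true_and]
          beta_reduce
          by_cases hi : i ∈ s <;> simp only [hi, if_true, if_false, iff_true, iff_false] <;> omega
      · intro x hx
        obtain ⟨hx, hxs⟩ := Finset.mem_filter.1 hx
        have hneg : ∀ i, x i < 0 ↔ i ∈ s := by
          intro i; rw [← hxs]; simp
        funext i
        beta_reduce
        by_cases hi : i ∈ s <;> simp only [hi, if_true, if_false]
        · have : x i < 0 := (hneg i).2 hi
          omega
        · have : ¬ x i < 0 := fun h => hi ((hneg i).1 h)
          omega
      · intro z _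
        funext i
        beta_reduce
        by_cases hi : i ∈ s <;> simp only [hi, if_true, if_false] <;> omega
    rw [key, crossPolytope_aux_count (m + 1) d (m - s.card)
      (Nat.lt_succ_of_le (Nat.sub_le m s.card))]
    clear key
    congr 1
    omega
  · push_neg at hsm
    have hempty : #(((Fintype.piFinset fun _ : Fin d => Finset.Icc (-(m : ℤ)) m).filter
          fun x => ∑ i, |x i| ≤ (m : ℤ)).filter
        fun x => (Finset.univ.filter fun i => x i < 0) = s) = 0 := by
      rw [Finset.card_eq_zero, Finset.eq_empty_iff_forall_notMem]
      intro x hx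
      obtain ⟨hx, hxs⟩ := Finset.mem_filter.1 hx
      obtain ⟨_, hxsum⟩ := Finset.mem_filter.1 hx
      have hneg : ∀ i, x i < 0 ↔ i ∈ s := by
        intro i; rw [← hxs]; simp
      have h1 : (s.card : ℤ) ≤ ∑ i ∈ s, |x i| := by
        have e1 : (s.card : ℤ) = ∑ _i ∈ s, (1 : ℤ) := by simp
        rw [e1]
        refine Finset.sum_le_sum fun i hi => ?_
        have hxi : x i < 0 := (hneg i).2 hi
        rw [abs_of_neg hxi]
        omega
      have h2 : ∑ i ∈ s, |x i| ≤ ∑ i, |x i| :=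
        Finset.sum_le_sum_of_subset_of_nonneg (Finset.subset_univ s)
          (fun i _ _ => abs_nonneg _)
      have h3 : (s.card : ℤ) ≤ (m : ℤ) := le_trans h1 (le_trans h2 hxsum)
      have : s.card ≤ m := by exact_mod_cast h3
      omega
    rw [hempty, Nat.choose_eq_zero_of_lt (by clear hempty; omega)]

/-- The number of lattice points in the `m`-th dilate of the `d`-dimensional
cross-polytope equals `∑_{j=0}^{d} C(d,j)·C(d-j+m, d)`. -/
theorem crossPolytope_lattice_point_count (d : ℕ) (hd : 1 ≤ d) (m : ℕ) :
    Set.ncard {x : Fin d → ℤ | (∑ i, |x i|) ≤ (m : ℤ)} =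
      ∑ j ∈ Finset.range (d + 1), Nat.choose d j * Nat.choose (d - j + m) d := by
  classical
  set F : Finset (Fin d → ℤ) :=
    (Fintype.piFinset fun _ : Fin d => Finset.Icc (-(m : ℤ)) m).filter
      fun x => ∑ i, |x i| ≤ (m : ℤ) with hF
  have hset : {x : Fin d → ℤ | (∑ i, |x i|) ≤ (m : ℤ)} = ↑F := by
    ext x
    simp only [Set.mem_setOf_eq, hF, Finset.coe_filter, Fintype.mem_piFinset, Finset.mem_Icc]
    constructor
    · intro hx
      refine ⟨fun i => ?_, hx⟩
      have h1 : |x i| ≤ ∑ j, |x j| :=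
        Finset.single_le_sum (fun j _ => abs_nonneg (x j)) (Finset.mem_univ i)
      have := le_trans h1 hx
      rw [abs_le] at this
      exact this
    · exact fun h => h.2
  rw [hset, Set.ncard_coe_finset]
  have hmemfib : ∀ x ∈ F, (Finset.univ.filter fun i => x i < 0) ∈
      (Finset.univ : Finset (Finset (Fin d))) := fun _ _ => Finset.mem_univ _
  rw [Finset.card_eq_sum_card_fiberwise hmemfib]
  rw [show (Finset.univ : Finset (Finset (Fin d))) = (Finset.univ : Finset (Fin d)).powerset from
    (Finset.powerset_univ).symm]
  rw [Finset.powerset_card_disjiUnion]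
  erw [Finset.sum_disjiUnion]
  have hcardu : (Finset.univ : Finset (Fin d)).card = d := by simp
  rw [hcardu]
  refine Finset.sum_congr rfl fun j hj => ?_
  have hinner : ∀ s ∈ (Finset.univ : Finset (Fin d)).powersetCard j,
      #(F.filter fun x => (Finset.univ.filter fun i => x i < 0) = s)
        = (d - j + m).choose d := by
    intro s hs
    have hcs : s.card = j := (Finset.mem_powersetCard.1 hs).2
    rw [hF, crossPolytope_fiber_count d m s, hcs]
  rw [Finset.sum_congr rfl hinner, Finset.sum_const, Finset.card_powersetCard, hcardu,
    smul_eq_mul]
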